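/- If a finite-state tick-automaton G with state set Q, marker states Qm, and cover {Q_{m,i} | i ∈ I} of Qm is bounded-time nonblocking with respect to {(Q_{m,i}, N_i) | i ∈ I}, then Lm(G) is bounded-time completable with respect to {(Lm(G), L_{m,i}(G), N_i) | i ∈ I}, where L_{m,i}(G) := {s ∈ Lm(G) | δ(q0, s) ∈ Q_{m,i}}. -/

import Mathlib

open List

attribute [local instance] Classical.propDecidable

/-- Prefix closure of a language. -/
def pclosure {E : Type*} (K : Set (List E)) : Set (List E) := {s | ∃ t, s ++ t ∈ K}

/-- Set of minimal extensions of `s` into `Ki` (equals `{ε}` when `s ∈ Ki`). -/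
noncomputable def Mset {E : Type*} (Ki : Set (List E)) (s : List E) : Set (List E) :=
  if s ∈ Ki then {([] : List E)} else
    {t | s ++ t ∈ Ki ∧ ∀ t', t' <+: t → t' ≠ t → s ++ t' ∉ Ki}

/-- `K` is bounded-time completable w.r.t. `(Lmi, N)` (with `tick` the clock event). -/
def BTComp {E : Type*} [DecidableEq E] (tick : E) (Lmi : Set (List E)) (N : ℕ)
    (K : Set (List E)) : Prop :=
  ∀ s ∈ pclosure K,
    (Mset (K ∩ Lmi) s).Nonempty ∧ ∀ t ∈ Mset (K ∩ Lmi) s, t.count tick ≤ N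
/-- Extension of a partial transition function to strings. -/
def runA {Q E : Type*} (δ : Q → E → Option Q) : Q → List E → Option Q
  | q, [] => some q
  | q, σ :: s => (δ q σ).bind fun q' => runA δ q' s

/-- Closed behavior of the automaton. -/
def Lg {Q E : Type*} (δ : Q → E → Option Q) (q0 : Q) : Set (List E) :=
  {s | (runA δ q0 s).isSome}

/-- Marked behavior (w.r.t. a set of marker states `Qm`). -/
def Lmg {Q E : Type*} (δ : Q → E → Option Q) (q0 : Q) (Qm : Set Q) : Set (List E) :=
  {s | ∃ q, runA δ q0 s = some q ∧ q ∈ Qm}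

/-- Strings leading state `q` to `Qmi` for the first time (equals `{ε}` if `q ∈ Qmi`). -/
noncomputable def Cset {Q E : Type*} (δ : Q → E → Option Q) (Qmi : Set Q) (q : Q) : Set (List E) :=
  if q ∈ Qmi then {([] : List E)} else
    {s | (∃ q', runA δ q s = some q' ∧ q' ∈ Qmi) ∧
      ∀ s', s' <+: s → s' ≠ s → ¬ ∃ q', runA δ q s' = some q' ∧ q' ∈ Qmi}

/-- State `q` is `N`-tick coreachable w.r.t. `Qmi`. -/
def NTickCoreach {Q E : Type*} [DecidableEq E] (tick : E) (δ : Q → E → Option Q)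
    (Qmi : Set Q) (N : ℕ) (q : Q) : Prop :=
  (Cset δ Qmi q).Nonempty ∧ ∀ s ∈ Cset δ Qmi q, s.count tick ≤ N

lemma runA_append {Q E : Type*} (δ : Q → E → Option Q) (q : Q) (s t : List E) :
    runA δ q (s ++ t) = (runA δ q s).bind (fun q' => runA δ q' t) := by
  induction s generalizing q with
  | nil => simp [runA]
  | cons a s ih =>
    simp only [List.cons_append, runA]
    cases δ q a with
    | none => rfl
    | some q' => exact ih q'

theorem btnonblocking_imp_btcomp {Q E : Type*} [Finite Q] [DecidableEq E] (tick : E)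
    (δ : Q → E → Option Q) (q0 : Q) (Qm : Set Q)
    (ι : Type*) (Qmi : ι → Set Q) (Ni : ι → ℕ)
    (hNi : ∀ i, 0 < Ni i) (hne : ∀ i, (Qmi i).Nonempty)
    (hcov1 : ∀ i, Qmi i ⊆ Qm) (hcov2 : (⋃ i, Qmi i) = Qm)
    (hbnb : ∀ (i : ι) (s : List E) (q : Q), runA δ q0 s = some q →
      NTickCoreach tick δ (Qmi i) (Ni i) q) :
    ∀ i : ι, BTComp tick (Lmg δ q0 (Qmi i)) (Ni i) (Lmg δ q0 Qm) := by
  intro i s hs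
  obtain ⟨t, qf, hrun, hqf⟩ := hs
  rw [runA_append] at hrun
  obtain ⟨q, hq, hrt⟩ := Option.bind_eq_some_iff.mp hrun
  have hcor := hbnb i s q hq
  have hmem : ∀ u, (s ++ u ∈ Lmg δ q0 Qm ∩ Lmg δ q0 (Qmi i)) ↔
      ∃ q', runA δ q u = some q' ∧ q' ∈ Qmi i := by
    intro u
    constructor
    · rintro ⟨-, q', h1, h2⟩
      rw [runA_append, hq, Option.bind_some] at h1
      exact ⟨q', h1, h2⟩
    · rintro ⟨q', h1, h2⟩
      refine ⟨⟨q', ?_, hcov1 i h2⟩, ⟨q', ?_, h2⟩⟩ <;>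
        · rw [runA_append, hq, Option.bind_some]; exact h1
  have hset : Mset (Lmg δ q0 Qm ∩ Lmg δ q0 (Qmi i)) s = Cset δ (Qmi i) q := by
    have hq0 : (s ∈ Lmg δ q0 Qm ∩ Lmg δ q0 (Qmi i)) ↔ q ∈ Qmi i := by
      simpa [runA] using hmem []
    unfold Mset Cset
    by_cases hqi : q ∈ Qmi i
    · rw [if_pos (hq0.mpr hqi), if_pos hqi]
    · rw [if_neg (fun h => hqi (hq0.mp h)), if_neg hqi]
      ext u
      simp only [Set.mem_setOf_eq]
      constructor
      · rintro ⟨h1, h2⟩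
        exact ⟨(hmem u).mp h1, fun u' hpre hne h => h2 u' hpre hne ((hmem u').mpr h)⟩
      · rintro ⟨h1, h2⟩
        exact ⟨(hmem u).mpr h1, fun u' hpre hne h => h2 u' hpre hne ((hmem u').mp h)⟩
  rw [hset]
  exact hcor
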